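/- Let C = ⟨A, B, Q, q0, δ, K, col⟩ be a deterministic concurrent arena and W ⊆ K^ω. If Player A (respectively, Player B) has a winning color strategy in ⟨C, W⟩, then Player A (respectively, Player B) has a winning color strategy in the sequential game ⟨Seq(C), Seq(W)⟩. -/

import Mathlib

open MeasureTheory
open scoped Classical

universe u

/-- The cylinder set generated by a finite word. -/
def Cyl {K : Type u} (w : List K) : Set (ℕ → K) :=
  {ρ | ∀ i : ℕ, ∀ h : i < w.length, ρ i = w.get ⟨i, h⟩}

/-- The σ-algebra on `ℕ → K` generated by cylinder sets. -/
def BorelSeq (K : Type u) : MeasurableSpace (ℕ → K) :=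
  MeasurableSpace.generateFrom {s | ∃ w : List K, s = Cyl w}

/-- A game form (given by its outcome function `ρ : S_A → S_B → O`) is determined if
for every subset `V` of outcomes, either Player A can force the outcome into `V`,
or Player B can force it out of `V`. -/
def GFDetermined {SA SB O : Type u} (ρ : SA → SB → O) : Prop :=
  ∀ V : Set O, (∃ a, ∀ b, ρ a b ∈ V) ∨ (∃ b, ∀ a, ρ a b ∉ V)

/-- The color history `col(π_0,π_1) ⋯ col(π_{n-1},π_n)` of a play prefix. -/
def colorHist {Q K : Type u} (col : Q → Q → K) (π : ℕ → Q) (n : ℕ) : List K :=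
  List.ofFn (fun i : Fin n => col (π i) (π (i + 1)))

/-- The color sequence of an infinite play. -/
def colorSeq {Q K : Type u} (col : Q → Q → K) (π : ℕ → Q) : ℕ → K :=
  fun n => col (π n) (π (n + 1))

/-- `π` is a play consistent with Player A's color strategy `sA`. -/
def PlayA {A B Q K : Type u} (q0 : Q) (δ : Q → A → B → Q) (col : Q → Q → K)
    (sA : List K → Q → A) (π : ℕ → Q) : Prop :=
  π 0 = q0 ∧ ∀ n, ∃ b, π (n + 1) = δ (π n) (sA (colorHist col π n) (π n)) b

/-- `π` is a play consistent with Player B's color strategy `sB`. -/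
def PlayB {A B Q K : Type u} (q0 : Q) (δ : Q → A → B → Q) (col : Q → Q → K)
    (sB : List K → Q → B) (π : ℕ → Q) : Prop :=
  π 0 = q0 ∧ ∀ n, ∃ a, π (n + 1) = δ (π n) a (sB (colorHist col π n) (π n))

/-- Player A's color strategy `sA` is winning for objective `W`. -/
def WinA {A B Q K : Type u} (q0 : Q) (δ : Q → A → B → Q) (col : Q → Q → K)
    (W : Set (ℕ → K)) (sA : List K → Q → A) : Prop :=
  ∀ π : ℕ → Q, PlayA q0 δ col sA π → colorSeq col π ∈ W

/-- Player B's color strategy `sB` is winning for the objective complementary to `W`. -/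
def WinB {A B Q K : Type u} (q0 : Q) (δ : Q → A → B → Q) (col : Q → Q → K)
    (W : Set (ℕ → K)) (sB : List K → Q → B) : Prop :=
  ∀ π : ℕ → Q, PlayB q0 δ col sB π → colorSeq col π ∉ W

/-- Transition function of the sequential version: from a Player A vertex `q`,
action `a` moves to `(q, a)`; from a Player B vertex `(q, a)`, Player B's action `b`
moves to `δ q a b`. -/
def seqDelta {A B Q : Type u} (δ : Q → A → B → Q) :
    Q ⊕ Q × A → A → B → Q ⊕ Q × A
  | Sum.inl q, a, _ => Sum.inr (q, a)
  | Sum.inr qa, _, b => Sum.inl (δ qa.1 qa.2 b)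

/-- Coloring of the sequential version: edges `(q, a) → q'` carry `some (col q q')`,
all other edges carry the fresh color `none`. -/
def seqCol {A Q K : Type u} (col : Q → Q → K) :
    Q ⊕ Q × A → Q ⊕ Q × A → Option K
  | Sum.inr qa, Sum.inl q' => some (col qa.1 q')
  | _, _ => none

/-- The length-`n` prefix of an infinite sequence, as a finite word. -/
def prefixWord {D : Type u} (ρ : ℕ → D) (n : ℕ) : List D :=
  List.ofFn (fun i : Fin n => ρ i)

/-- A finite word is a prefix of an infinite sequence. -/
def IsPrefixOfSeq {K : Type u} (w : List K) (ρ : ℕ → K) : Prop :=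
  ∀ i : ℕ, ∀ h : i < w.length, w.get ⟨i, h⟩ = ρ i

/-- `ρ ∈ K^ω` is the projection of `ρ' ∈ (Option K)^ω`: every erased prefix of `ρ'`
is a prefix of `ρ` and the lengths of the erased prefixes tend to infinity
(equivalently, `ρ'` has infinitely many `some` entries whose values, in order,
form `ρ`). -/
def IsProjOf {K : Type u} (ρ : ℕ → K) (ρ' : ℕ → Option K) : Prop :=
  (∀ n : ℕ, IsPrefixOfSeq ((prefixWord ρ' n).reduceOption) ρ) ∧
  Filter.Tendsto (fun n => ((prefixWord ρ' n).reduceOption).length)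
    Filter.atTop Filter.atTop

/-- The sequential version `Seq(W)` of an objective `W ⊆ K^ω`: the sequences in
`(Option K)^ω` with infinitely many `some` entries whose subsequence of values
lies in `W`. -/
def SeqObj {K : Type u} (W : Set (ℕ → K)) : Set (ℕ → Option K) :=
  {ρ' | ∃ ρ ∈ W, IsProjOf ρ ρ'}

section Aux

variable {A B Q K : Type u}

/-- Project a vertex of the sequential arena to its underlying state. -/
def toQ : Q ⊕ Q × A → Q
  | Sum.inl q => q
  | Sum.inr qa => qa.1

/-- Lift a Player A color strategy to the sequential arena. -/
def liftA (sA : List K → Q → A) : List (Option K) → Q ⊕ Q × A → A :=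
  fun h v => sA h.reduceOption (toQ v)

/-- Lift a Player B color strategy to the sequential arena. -/
def liftB (sB : List K → Q → B) : List (Option K) → Q ⊕ Q × A → B :=
  fun h v => sB h.reduceOption (toQ v)

lemma colorHist_succ (col : Q → Q → K) (π : ℕ → Q) (n : ℕ) :
    colorHist col π (n + 1) = colorHist col π n ++ [col (π n) (π (n + 1))] := by
  unfold colorHist
  rw [List.ofFn_succ']
  simp only [List.concat_eq_append, Fin.coe_castSucc, Fin.val_last]

lemma colorHist_length (col : Q → Q → K) (π : ℕ → Q) (n : ℕ) :
    (colorHist col π n).length = n := by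
  simp [colorHist]

lemma colorHist_get (col : Q → Q → K) (π : ℕ → Q) (n : ℕ)
    (idx : Fin (colorHist col π n).length) :
    (colorHist col π n).get idx = col (π idx) (π (idx + 1)) := by
  rw [List.get_eq_getElem]
  simp [colorHist, List.getElem_ofFn]

lemma seqCol_inl (col : Q → Q → K) (x : Q) (y : Q ⊕ Q × A) :
    seqCol col (Sum.inl x : Q ⊕ Q × A) y = none := by
  cases y <;> rfl

lemma prefixWord_colorSeq (c : (Q ⊕ Q × A) → (Q ⊕ Q × A) → Option K)
    (π' : ℕ → Q ⊕ Q × A) (n : ℕ) :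
    prefixWord (colorSeq c π') n = colorHist c π' n := rfl

/-- Structural analysis of a play in the sequential arena consistent with a lifted
Player A strategy. -/
lemma keyA (q0 : Q) (δ : Q → A → B → Q) (col : Q → Q → K) (sA : List K → Q → A)
    (π' : ℕ → Q ⊕ Q × A)
    (h : PlayA (Sum.inl q0) (seqDelta δ) (seqCol col) (liftA sA) π') :
    ∃ π : ℕ → Q, PlayA q0 δ col sA π ∧
      ∀ m, (colorHist (seqCol col) π' m).reduceOption = colorHist col π (m / 2) := by
  set π : ℕ → Q := fun n => toQ (π' (2 * n)) with hπ
  have base : π' (2 * 0) = Sum.inl (π 0) := by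
    have h0 := h.1
    simp only [Nat.mul_zero]
    rw [h0]
    simp [hπ, h0, toQ]
  have key : ∀ n : ℕ, π' (2 * n) = Sum.inl (π n) ∧
      (colorHist (seqCol col) π' (2 * n)).reduceOption = colorHist col π n := by
    intro n
    induction n with
    | zero => exact ⟨base, by simp [colorHist]⟩
    | succ n ih =>
      obtain ⟨hin, hhist⟩ := ih
      obtain ⟨b1, hb1⟩ := h.2 (2 * n)
      rw [hin] at hb1
      -- π' (2n+1) = inr (π n, a)
      have hodd : π' (2 * n + 1) = Sum.inr (π n, liftA sA (colorHist (seqCol col) π' (2 * n)) (Sum.inl (π n))) := hb1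
      obtain ⟨b2, hb2⟩ := h.2 (2 * n + 1)
      rw [hodd] at hb2
      have heven : π' (2 * n + 2) = Sum.inl (δ (π n) (liftA sA (colorHist (seqCol col) π' (2 * n)) (Sum.inl (π n))) b2) := hb2
      have h2n2 : 2 * (n + 1) = 2 * n + 2 := by ring
      have hπn1 : π (n + 1) = δ (π n) (liftA sA (colorHist (seqCol col) π' (2 * n)) (Sum.inl (π n))) b2 := by
        simp [hπ, h2n2, heven, toQ]
      constructor
      · rw [h2n2, heven, hπn1]
      · rw [h2n2]
        have e1 : colorHist (seqCol col) π' (2 * n + 2)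
            = colorHist (seqCol col) π' (2 * n) ++ [seqCol col (π' (2 * n)) (π' (2 * n + 1)), seqCol col (π' (2 * n + 1)) (π' (2 * n + 2))] := by
          rw [colorHist_succ, colorHist_succ, List.append_assoc]
          rfl
        rw [e1, hin, hodd, heven, seqCol_inl]
        simp only [List.reduceOption_append, hhist]
        rw [colorHist_succ, hπn1]
        simp [seqCol, List.reduceOption]
  have hplay : PlayA q0 δ col sA π := by
    constructor
    · have h0 := h.1
      simp [hπ, h0, toQ]
    · intro n
      obtain ⟨hin, hhist⟩ := key n
      obtain ⟨b1, hb1⟩ := h.2 (2 * n)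
      rw [hin] at hb1
      obtain ⟨b2, hb2⟩ := h.2 (2 * n + 1)
      rw [hb1] at hb2
      refine ⟨b2, ?_⟩
      have h2n2 : 2 * (n + 1) = 2 * n + 2 := by ring
      have : π (n + 1) = toQ (π' (2 * n + 2)) := by
        rw [show 2 * n + 2 = 2 * (n + 1) by ring]
      rw [this, hb2]
      simp [seqDelta, toQ, liftA, hhist]
  refine ⟨π, hplay, ?_⟩
  intro m
  rcases Nat.even_or_odd m with ⟨n, hn⟩ | ⟨n, hn⟩
  · have : m = 2 * n := by omega
    subst this
    rw [Nat.mul_div_cancel_left n (by norm_num)]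
    exact (key n).2
  · subst hn
    obtain ⟨hin, hhist⟩ := key n
    have e1 : colorHist (seqCol col) π' (2 * n + 1)
        = colorHist (seqCol col) π' (2 * n) ++ [seqCol col (π' (2 * n)) (π' (2 * n + 1))] :=
      colorHist_succ _ _ _
    rw [e1, hin, seqCol_inl]
    have : (2 * n + 1) / 2 = n := by omega
    rw [this, List.reduceOption_append, hhist]
    simp

/-- Structural analysis of a play in the sequential arena consistent with a lifted
Player B strategy. -/
lemma keyB (q0 : Q) (δ : Q → A → B → Q) (col : Q → Q → K) (sB : List K → Q → B)
    (π' : ℕ → Q ⊕ Q × A)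
    (h : PlayB (Sum.inl q0) (seqDelta δ) (seqCol col) (liftB sB) π') :
    ∃ π : ℕ → Q, PlayB q0 δ col sB π ∧
      ∀ m, (colorHist (seqCol col) π' m).reduceOption = colorHist col π (m / 2) := by
  set π : ℕ → Q := fun n => toQ (π' (2 * n)) with hπ
  have base : π' (2 * 0) = Sum.inl (π 0) := by
    have h0 := h.1
    simp only [Nat.mul_zero]
    rw [h0]
    simp [hπ, h0, toQ]
  have histodd : ∀ n, π' (2 * n) = Sum.inl (π n) →
      (colorHist (seqCol col) π' (2 * n + 1)).reduceOption
        = (colorHist (seqCol col) π' (2 * n)).reduceOption := by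
    intro n hin
    rw [colorHist_succ, hin, seqCol_inl, List.reduceOption_append]
    simp
  have key : ∀ n : ℕ, π' (2 * n) = Sum.inl (π n) ∧
      (colorHist (seqCol col) π' (2 * n)).reduceOption = colorHist col π n := by
    intro n
    induction n with
    | zero => exact ⟨base, by simp [colorHist]⟩
    | succ n ih =>
      obtain ⟨hin, hhist⟩ := ih
      obtain ⟨a1, ha1⟩ := h.2 (2 * n)
      rw [hin] at ha1
      have hodd : π' (2 * n + 1) = Sum.inr (π n, a1) := ha1
      obtain ⟨a2, ha2⟩ := h.2 (2 * n + 1)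
      rw [hodd] at ha2
      have heven : π' (2 * n + 2)
          = Sum.inl (δ (π n) a1 (liftB sB (colorHist (seqCol col) π' (2 * n + 1)) (Sum.inr (π n, a1)))) := ha2
      have h2n2 : 2 * (n + 1) = 2 * n + 2 := by ring
      have hπn1 : π (n + 1)
          = δ (π n) a1 (liftB sB (colorHist (seqCol col) π' (2 * n + 1)) (Sum.inr (π n, a1))) := by
        simp [hπ, h2n2, heven, toQ]
      have heven' : π' (2 * n + 2) = Sum.inl (π (n + 1)) := by rw [heven, hπn1]
      constructor
      · rw [h2n2, heven']
      · rw [h2n2]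
        have e1 : colorHist (seqCol col) π' (2 * n + 2)
            = colorHist (seqCol col) π' (2 * n) ++ [seqCol col (π' (2 * n)) (π' (2 * n + 1)), seqCol col (π' (2 * n + 1)) (π' (2 * n + 2))] := by
          rw [colorHist_succ, colorHist_succ, List.append_assoc]
          rfl
        rw [e1, hin, hodd, heven', seqCol_inl]
        simp only [List.reduceOption_append, hhist]
        rw [colorHist_succ (col := col)]
        simp [seqCol]
  have hplay : PlayB q0 δ col sB π := by
    constructor
    · have h0 := h.1
      simp [hπ, h0, toQ]
    · intro n
      obtain ⟨hin, hhist⟩ := key n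
      obtain ⟨a1, ha1⟩ := h.2 (2 * n)
      rw [hin] at ha1
      obtain ⟨a2, ha2⟩ := h.2 (2 * n + 1)
      rw [ha1] at ha2
      refine ⟨a1, ?_⟩
      have : π (n + 1) = toQ (π' (2 * n + 2)) := by
        rw [show 2 * n + 2 = 2 * (n + 1) by ring]
      rw [this, ha2]
      have hh := histodd n hin
      simp [seqDelta, toQ, liftB, hh, hhist]
  refine ⟨π, hplay, ?_⟩
  intro m
  rcases Nat.even_or_odd m with ⟨n, hn⟩ | ⟨n, hn⟩
  · have : m = 2 * n := by omega
    subst this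
    rw [Nat.mul_div_cancel_left n (by norm_num)]
    exact (key n).2
  · subst hn
    obtain ⟨hin, hhist⟩ := key n
    rw [histodd n hin, hhist]
    congr 1
    omega

end Aux
/-- For any deterministic concurrent arena: if Player A (resp. Player B) has a
winning color strategy in `⟨C, W⟩`, then she has one in the sequential game
`⟨Seq(C), Seq(W)⟩`. -/
theorem stmt8 {A B Q K : Type u} [Nonempty A] [Nonempty B] [Nonempty Q] [Nonempty K]
    (q0 : Q) (δ : Q → A → B → Q) (col : Q → Q → K) (W : Set (ℕ → K)) :
    ((∃ sA : List K → Q → A, WinA q0 δ col W sA) →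
      ∃ σA : List (Option K) → Q ⊕ Q × A → A,
        WinA (Sum.inl q0) (seqDelta δ) (seqCol col) (SeqObj W) σA) ∧
    ((∃ sB : List K → Q → B, WinB q0 δ col W sB) →
      ∃ σB : List (Option K) → Q ⊕ Q × A → B,
        WinB (Sum.inl q0) (seqDelta δ) (seqCol col) (SeqObj W) σB) := by
  constructor
  · rintro ⟨sA, hsA⟩
    refine ⟨liftA sA, ?_⟩
    intro π' hπ'
    obtain ⟨π, hplay, hhist⟩ := keyA q0 δ col sA π' hπ'
    refine ⟨colorSeq col π, hsA π hplay, ?_, ?_⟩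
    · intro n i hi
      have e : (prefixWord (colorSeq (seqCol col) π') n).reduceOption
          = colorHist col π (n / 2) := by rw [prefixWord_colorSeq, hhist]
      rw [List.get_of_eq e, colorHist_get]
      rfl
    · have hlen : ∀ n, ((prefixWord (colorSeq (seqCol col) π') n).reduceOption).length = n / 2 := by
        intro n
        rw [prefixWord_colorSeq, hhist, colorHist_length]
      simp only [hlen]
      exact Filter.tendsto_atTop_atTop.mpr fun b => ⟨2 * b, fun m hm => by omega⟩
  · rintro ⟨sB, hsB⟩
    refine ⟨liftB sB, ?_⟩
    intro π' hπ' hmem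
    obtain ⟨π, hplay, hhist⟩ := keyB q0 δ col sB π' hπ'
    obtain ⟨ρ, hρW, hpre, _⟩ := hmem
    have hρ : ρ = colorSeq col π := by
      funext i
      have hp := hpre (2 * (i + 1))
      rw [prefixWord_colorSeq, hhist, Nat.mul_div_cancel_left _ (by norm_num : 0 < 2)] at hp
      have hi : i < (colorHist col π (i + 1)).length := by
        rw [colorHist_length]; omega
      have := hp i hi
      rw [colorHist_get] at this
      exact this.symm
    exact hsB π hplay (hρ ▸ hρW)
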